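/- Let m ≥ 2 and suppose x : S → ℝ satisfies ∑_{i∈S} x_i ≥ 1 with 0 ≤ 2 ln m · x_i ≤ 1 for each i. If thresholds t_i are independent uniform on [0,1], then the probability that 2 ln m · x_i < t_i for every i ∈ S is at most 1/m². -/

import Mathlib

open MeasureTheory ProbabilityTheory

theorem coverage_edge_miss_prob
    {Ω : Type*} [MeasurableSpace Ω] (μ : Measure Ω) [IsProbabilityMeasure μ]
    {S : Type*} [Fintype S] (m : ℝ) (hm : 2 ≤ m) (x : S → ℝ)
    (hx0 : ∀ i, 0 ≤ 2 * Real.log m * x i) (hx1 : ∀ i, 2 * Real.log m * x i ≤ 1)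
    (hsum : 1 ≤ ∑ i, x i)
    (t : S → Ω → ℝ) (ht : ∀ i, Measurable (t i))
    (hindep : iIndepFun t μ)
    (hunif : ∀ i, μ.map (t i) = MeasureTheory.volume.restrict (Set.Icc (0 : ℝ) 1)) :
    μ {ω | ∀ i, 2 * Real.log m * x i < t i ω} ≤ ENNReal.ofReal (1 / m ^ 2) := by
  set c : S → ℝ := fun i => 2 * Real.log m * x i with hc
  have hx0' : ∀ i, 0 ≤ c i := hx0
  have hx1' : ∀ i, c i ≤ 1 := hx1
  have hm0 : (0:ℝ) < m := by linarith
  have hlog : 0 ≤ Real.log m := Real.log_nonneg (by linarith)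
  -- rewrite the event as an intersection of preimages
  have hset : {ω | ∀ i, c i < t i ω} = ⋂ i, t i ⁻¹' Set.Ioi (c i) := by
    ext ω; simp [Set.mem_iInter]
  have hmeas : μ {ω | ∀ i, c i < t i ω} = ∏ i, μ (t i ⁻¹' Set.Ioi (c i)) := by
    rw [hset]
    exact hindep.meas_iInter fun i => ⟨Set.Ioi (c i), measurableSet_Ioi, rfl⟩
  -- compute each factor
  have hfac : ∀ i, μ (t i ⁻¹' Set.Ioi (c i)) = ENNReal.ofReal (1 - c i) := by
    intro i
    have : μ (t i ⁻¹' Set.Ioi (c i)) = (μ.map (t i)) (Set.Ioi (c i)) := by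
      rw [Measure.map_apply (ht i) measurableSet_Ioi]
    rw [this, hunif i, Measure.restrict_apply measurableSet_Ioi]
    have : Set.Ioi (c i) ∩ Set.Icc (0:ℝ) 1 = Set.Ioc (c i) 1 := by
      ext y
      simp only [Set.mem_inter_iff, Set.mem_Ioi, Set.mem_Icc, Set.mem_Ioc]
      constructor
      · rintro ⟨h1, _, h3⟩; exact ⟨h1, h3⟩
      · rintro ⟨h1, h2⟩; exact ⟨h1, le_trans (hx0 i) h1.le, h2⟩
    rw [this, Real.volume_Ioc]
  rw [hmeas]
  simp only [hfac]
  rw [← ENNReal.ofReal_prod_of_nonneg (fun i _ => by linarith [hx1' i])]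
  apply ENNReal.ofReal_le_ofReal
  have hle : ∏ i, (1 - c i) ≤ ∏ i, Real.exp (-(c i)) := by
    apply Finset.prod_le_prod
    · intro i _; linarith [hx1' i]
    · intro i _
      have := Real.add_one_le_exp (-(c i))
      linarith
  calc ∏ i, (1 - c i) ≤ ∏ i, Real.exp (-(c i)) := hle
    _ = Real.exp (∑ i, -(c i)) := (Real.exp_sum _ _).symm
    _ ≤ Real.exp (-(2 * Real.log m)) := by
        apply Real.exp_le_exp.mpr
        have : ∑ i, -(c i) = -(2 * Real.log m * ∑ i, x i) := by
          simp [hc, Finset.mul_sum, Finset.sum_neg_distrib]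
        rw [this]
        have : 2 * Real.log m ≤ 2 * Real.log m * ∑ i, x i := by
          nlinarith
        linarith
    _ = 1 / m ^ 2 := by
        rw [Real.exp_neg]
        have : Real.exp (2 * Real.log m) = m ^ 2 := by
          rw [two_mul, Real.exp_add, Real.exp_log hm0, sq]
        rw [this, one_div]
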